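/- Let H be a real inner product space, let S ⊆ S' be finite-dimensional subspaces of H, let y ∈ H, and let r = y − P_S(y) and r' = y − P_{S'}(y), where P_S and P_{S'} denote orthogonal projection onto S and S' respectively. Then for any nonzero φ ∈ S', ‖r'‖² ≤ ‖r‖² − ⟨φ, r⟩²/‖φ‖². -/

import Mathlib

/-- Let `H` be a real inner product space, let `S ⊆ S'` be finite-dimensional subspaces of
`H`, let `y ∈ H`, and let `r = y − P_S(y)` and `r' = y − P_{S'}(y)` where `P_S`, `P_{S'}`
are the orthogonal projections. Then for any nonzero `φ ∈ S'`,
`‖r'‖² ≤ ‖r‖² − ⟨φ, r⟩²/‖φ‖²`. -/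
theorem stmt_8 {H : Type*} [NormedAddCommGroup H] [InnerProductSpace ℝ H]
    (S S' : Submodule ℝ H) [FiniteDimensional ℝ S] [FiniteDimensional ℝ S']
    (hSS' : S ≤ S') (y : H)
    (r r' : H) (hr : r = y - (S.orthogonalProjectionOnto y : H))
    (hr' : r' = y - (S'.orthogonalProjectionOnto y : H))
    (φ : H) (hφS' : φ ∈ S') (hφ : φ ≠ 0) :
    ‖r'‖ ^ 2 ≤ ‖r‖ ^ 2 - (inner ℝ φ r : ℝ) ^ 2 / ‖φ‖ ^ 2 := by
  set d : H := (S'.orthogonalProjectionOnto y : H) - (S.orthogonalProjectionOnto y : H) with hd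
  have hdS' : d ∈ S' := sub_mem (S'.orthogonalProjectionOnto y).2 (hSS' (S.orthogonalProjectionOnto y).2)
  have hr'perp : r' ∈ S'ᗮ := by
    rw [hr']; exact S'.sub_starProjection_mem_orthogonal y
  have hrd : r = r' + d := by rw [hr, hr', hd]; abel
  have hinner_d : (inner ℝ d r' : ℝ) = 0 := hr'perp d hdS'
  have hinner_d' : (inner ℝ r' d : ℝ) = 0 := by rwa [real_inner_comm]
  have hpyth : ‖r‖ ^ 2 = ‖r'‖ ^ 2 + ‖d‖ ^ 2 := by
    rw [hrd, @norm_add_sq_real, hinner_d']; ring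
  have hφr : (inner ℝ φ r : ℝ) = inner ℝ φ d := by
    rw [hrd, inner_add_right, hr'perp φ hφS', zero_add]
  have hcs : (inner ℝ φ r : ℝ) ^ 2 ≤ ‖φ‖ ^ 2 * ‖d‖ ^ 2 := by
    rw [hφr]
    calc (inner ℝ φ d : ℝ) ^ 2 = |inner ℝ φ d| ^ 2 := (sq_abs _).symm
      _ ≤ (‖φ‖ * ‖d‖) ^ 2 := by
          have := abs_real_inner_le_norm φ d
          exact pow_le_pow_left₀ (abs_nonneg _) this 2
      _ = ‖φ‖ ^ 2 * ‖d‖ ^ 2 := by ring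
  have hφpos : (0:ℝ) < ‖φ‖ ^ 2 := pow_pos (norm_pos_iff.mpr hφ) 2
  have : (inner ℝ φ r : ℝ) ^ 2 / ‖φ‖ ^ 2 ≤ ‖d‖ ^ 2 := by
    rw [div_le_iff₀ hφpos]; linarith [hcs]
  linarith
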